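/- Multiple robustness and product-form bias bound for the treated mean in Scenario 2 (Theorem 4 and Section 3.1, with q known): (a) For admissible nuisance candidates μ̃₁₁, μ̃₁₀, μ̃₀₀, τ̃, π̃, if one of the following holds P∘X⁻¹-a.e. — (i) μ̃₁₁/μ̃₁₀ = μ₁₁/μ₁₀ and μ̃₀₀ = μ₀₀; (ii) μ̃₁₁/μ̃₁₀ = μ₁₁/μ₁₀ and π̃ = π; (iii) μ̃₀₀ = μ₀₀, μ̃₁₀ = μ₁₀ and τ̃ = τ — then E[ H₂(μ̃₁₁, μ̃₁₀, μ̃₀₀, τ̃, π̃) ] = α₂. (b) There is a constant C, depending only on ε, M and P(S=0), such that for all admissible nuisance candidates: | E[ H₂(μ̃₁₁, μ̃₁₀, μ̃₀₀, τ̃, π̃) ] − α₂ | ≤ C·[ ‖μ̃₁₁/μ̃₁₀ − μ₁₁/μ₁₀‖·( ‖μ̃₀₀ − μ₀₀‖ + ‖μ̃₁₀ − μ₁₀‖ + ‖τ̃ − τ‖ ) + ‖μ̃₀₀ − μ₀₀‖·‖π̃ − π‖ ]. -/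

import Mathlib

set_option maxHeartbeats 4000000

open MeasureTheory

/-- `m` is a version of the conditional expectation `E[Z ∣ X; B]`. -/
def IsVersion {Ω E : Type*} [MeasurableSpace Ω] [MeasurableSpace E]
    (P : Measure Ω) (X : Ω → E) (Z : Ω → ℝ) (B : Set Ω) (m : E → ℝ) : Prop :=
  Measurable m ∧
    ∀ h : E → ℝ, Measurable h → (∃ C, ∀ x, |h x| ≤ C) →
      ∫ ω in B, Z ω * h (X ω) ∂P = ∫ ω in B, m (X ω) * h (X ω) ∂P

/-- Conditional mean `E[Z ∣ B]` of a real random variable given an event `B`. -/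
noncomputable def condMean {Ω : Type*} [MeasurableSpace Ω]
    (P : Measure Ω) (Z : Ω → ℝ) (B : Set Ω) : ℝ :=
  (∫ ω in B, Z ω ∂P) / (P B).toReal

/-- The norm `‖f‖ = (E[f(X)²])^{1/2}`. -/
noncomputable def normX {Ω E : Type*} [MeasurableSpace Ω]
    (P : Measure Ω) (X : Ω → E) (f : E → ℝ) : ℝ :=
  Real.sqrt (∫ ω, (f (X ω)) ^ 2 ∂P)

/-- Admissible nuisance candidates for Scenario 2 (with propensity candidate `p`). -/
def Admissible2 {Ω E : Type*} [MeasurableSpace Ω] [MeasurableSpace E]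
    (P : Measure Ω) (X : Ω → E) (ε M : ℝ) (m11 m10 m00 t p : E → ℝ) : Prop :=
  Measurable m11 ∧ Measurable m10 ∧ Measurable m00 ∧ Measurable t ∧ Measurable p ∧
    (∀ x, ε ≤ p x ∧ p x ≤ 1 - ε) ∧
    ∀ᵐ ω ∂P, ε ≤ |m10 (X ω)| ∧ |m11 (X ω)| ≤ M ∧ |m10 (X ω)| ≤ M ∧
      |m00 (X ω)| ≤ M ∧ 0 ≤ t (X ω) ∧ t (X ω) ≤ M

/-- The Scenario 2 uncentered estimating function `H₂`, with `κ = 1/P(S=0)`. -/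
noncomputable def H2 {Ω E : Type*} [MeasurableSpace Ω]
    (P : Measure Ω) (X : Ω → E) (S A Y : Ω → ℝ) (q m11 m10 m00 t p : E → ℝ) :
    Ω → ℝ := fun ω =>
  (P {ω' | S ω' = 0}).toReal⁻¹ *
    ((1 - S ω) * (m11 (X ω) / m10 (X ω)) *
        (m00 (X ω) + (1 - A ω) / p (X ω) * (Y ω - m00 (X ω))) +
      S ω * t (X ω) * (m00 (X ω) / m10 (X ω)) *
        (A ω / q (X ω) * (Y ω - m11 (X ω)) -
          (1 - A ω) / (1 - q (X ω)) * (m11 (X ω) / m10 (X ω)) * (Y ω - m10 (X ω))))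

section Helpers

lemma key_identity (s a y p q g t pi m11 m10 m00 u11 u10 u00 : ℝ)
    (hm10 : m10 ≠ 0) (hu10 : u10 ≠ 0) (hp : p ≠ 0) (hq : q ≠ 0) (hq1 : 1 - q ≠ 0)
    (hg : g ≠ 0) :
    (1 - s) * (m11 / m10) * (m00 + (1 - a) / p * (y - m00)) +
      s * t * (m00 / m10) *
        (a / q * (y - m11) - (1 - a) / (1 - q) * (m11 / m10) * (y - m10))
    = (1 - s) * (u11 / u10) * u00
      + (1 - s) * (m11 / m10 - u11 / u10) * (u00 - m00)
      + (1 - s) * (m11 / m10 - u11 / u10) * (m00 / m10) * (m10 - u10)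
      + (1 - s) * (m11 / m10) * ((pi - p) / p) * (u00 - m00)
      + g * (t - (1 - g) / g) * (m00 / m10) * u10 * (u11 / u10 - m11 / m10)
      + ((1 - s) * (1 - a) * (y * (m11 / m10 / p))
          - (1 - s) * (1 - a) * (u00 * (m11 / m10 / p)))
      + ((1 - s) * ((1 - a) * (m11 / m10 / p * (u00 - m00)))
          - (1 - s) * (pi * (m11 / m10 / p * (u00 - m00))))
      + (s * a * (y * (t * (m00 / m10) / q))
          - s * a * (u11 * (t * (m00 / m10) / q)))
      + (s * (a * (t * (m00 / m10) / q * (u11 - m11)))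
          - s * (q * (t * (m00 / m10) / q * (u11 - m11))))
      + (s * (1 - a) * (u10 * (t * (m00 / m10) * (m11 / m10) / (1 - q)))
          - s * (1 - a) * (y * (t * (m00 / m10) * (m11 / m10) / (1 - q))))
      + (s * (a * (t * (m00 / m10) * (m11 / m10) / (1 - q) * (u10 - m10)))
          - s * (q * (t * (m00 / m10) * (m11 / m10) / (1 - q) * (u10 - m10))))
      + (s * (t * (m00 / m10) * u10 * (u11 / u10 - m11 / m10))
          - g * (t * (m00 / m10) * u10 * (u11 / u10 - m11 / m10)))
      + (s * (m00 / m10 * u10 * (u11 / u10 - m11 / m10))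
          - g * (m00 / m10 * u10 * (u11 / u10 - m11 / m10))) := by
  field_simp
  ring

lemma cs_integral {Ω : Type*} [MeasurableSpace Ω] (P : Measure Ω) [IsProbabilityMeasure P]
    (f g : Ω → ℝ) (hf : Measurable f) (hg : Measurable g) (Cf Cg : ℝ)
    (hbf : ∀ ω, |f ω| ≤ Cf) (hbg : ∀ ω, |g ω| ≤ Cg) :
    ∫ ω, |f ω| * |g ω| ∂P ≤ Real.sqrt (∫ ω, f ω ^ 2 ∂P) * Real.sqrt (∫ ω, g ω ^ 2 ∂P) := by
  have h22 : (2:ℝ).HolderConjugate 2 := Real.holderConjugate_iff.mpr ⟨one_lt_two, by norm_num⟩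
  have hmf : MemLp (fun ω => |f ω|) (ENNReal.ofReal (2:ℝ)) P :=
    MemLp.of_bound hf.abs.aestronglyMeasurable Cf
      (Filter.Eventually.of_forall fun ω => by simpa using hbf ω)
  have hmg : MemLp (fun ω => |g ω|) (ENNReal.ofReal (2:ℝ)) P :=
    MemLp.of_bound hg.abs.aestronglyMeasurable Cg
      (Filter.Eventually.of_forall fun ω => by simpa using hbg ω)
  have key := integral_mul_le_Lp_mul_Lq_of_nonneg h22
    (Filter.Eventually.of_forall fun ω => abs_nonneg (f ω))
    (Filter.Eventually.of_forall fun ω => abs_nonneg (g ω)) hmf hmg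
  have hr2 : ∀ x : ℝ, |x| ^ (2:ℝ) = x ^ 2 := fun x => by
    rw [show (2:ℝ) = ((2:ℕ):ℝ) by norm_num, Real.rpow_natCast, sq_abs]
  simp only [hr2] at key
  calc ∫ ω, |f ω| * |g ω| ∂P
      ≤ (∫ ω, f ω ^ 2 ∂P) ^ ((1:ℝ)/2) * (∫ ω, g ω ^ 2 ∂P) ^ ((1:ℝ)/2) := key
    _ = Real.sqrt (∫ ω, f ω ^ 2 ∂P) * Real.sqrt (∫ ω, g ω ^ 2 ∂P) := by
        rw [Real.sqrt_eq_rpow, Real.sqrt_eq_rpow]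

lemma weight_integral {Ω : Type*} [MeasurableSpace Ω] (P : Measure Ω) {B : Set Ω}
    (hB : MeasurableSet B) (w : Ω → ℝ) (hw1 : ∀ ω ∈ B, w ω = 1)
    (hw0 : ∀ ω, ω ∉ B → w ω = 0) (f : Ω → ℝ) :
    ∫ ω in B, f ω ∂P = ∫ ω, w ω * f ω ∂P := by
  rw [← integral_indicator hB]
  refine integral_congr_ae (Filter.Eventually.of_forall fun ω => ?_)
  show B.indicator f ω = w ω * f ω
  by_cases h : ω ∈ B
  · rw [Set.indicator_of_mem h, hw1 ω h, one_mul]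
  · rw [Set.indicator_of_notMem h, hw0 ω h, zero_mul]

lemma integrable_of_bddM {Ω : Type*} [MeasurableSpace Ω] (P : Measure Ω) [IsFiniteMeasure P]
    {f : Ω → ℝ} (hf : Measurable f) (C : ℝ) (h : ∀ ω, |f ω| ≤ C) : Integrable f P :=
  Integrable.mono' (integrable_const C) hf.aestronglyMeasurable
    (Filter.Eventually.of_forall fun ω => by simpa [Real.norm_eq_abs] using h ω)

lemma amul {a b C D : ℝ} (ha : |a| ≤ C) (hb : |b| ≤ D) : |a * b| ≤ C * D := by
  rw [abs_mul]; exact mul_le_mul ha hb (abs_nonneg b) ((abs_nonneg a).trans ha)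

lemma asub {a b C D : ℝ} (ha : |a| ≤ C) (hb : |b| ≤ D) : |a - b| ≤ C + D := by
  rw [sub_eq_add_neg]
  exact (abs_add_le a (-b)).trans (by rw [abs_neg]; exact add_le_add ha hb)

lemma adiv {a b C d : ℝ} (ha : |a| ≤ C) (hd : 0 < d) (hb : d ≤ |b|) : |a / b| ≤ C / d := by
  rw [abs_div]; exact div_le_div₀ ((abs_nonneg a).trans ha) ha hd hb

lemma nz_of_eps {ε v : ℝ} (hε : 0 < ε) (h : ε ≤ |v|) : v ≠ 0 := by
  intro h0
  rw [h0, abs_zero] at h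
  linarith

end Helpers

/-- Multiple robustness and product-form bias bound for the treated mean in Scenario 2
(Theorem 4 and Section 3.1, with `q` known, `τ = (1−g)/g`):
(a) if one of (i) `μ̃₁₁/μ̃₁₀ = μ₁₁/μ₁₀` and `μ̃₀₀ = μ₀₀`; (ii) `μ̃₁₁/μ̃₁₀ = μ₁₁/μ₁₀` and
`π̃ = π`; (iii) `μ̃₀₀ = μ₀₀`, `μ̃₁₀ = μ₁₀` and `τ̃ = τ` holds a.e., then
`E[H₂(μ̃₁₁,μ̃₁₀,μ̃₀₀,τ̃,π̃)] = α₂`;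
(b) there is a constant `C` (depending only on `ε`, `M`, `P(S=0)`) with
`|E[H₂] − α₂| ≤ C·[‖μ̃₁₁/μ̃₁₀ − μ₁₁/μ₁₀‖·(‖μ̃₀₀ − μ₀₀‖ + ‖μ̃₁₀ − μ₁₀‖ + ‖τ̃ − τ‖)
                 + ‖μ̃₀₀ − μ₀₀‖·‖π̃ − π‖]`. -/
theorem H2_multiple_robustness_and_bias_bound
    {Ω E : Type*} [MeasurableSpace Ω] [MeasurableSpace E]
    (P : Measure Ω) [IsProbabilityMeasure P]
    (X : Ω → E) (S A Y : Ω → ℝ)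
    (hX : Measurable X) (hS : Measurable S) (hA : Measurable A) (hY : Measurable Y)
    (hS01 : ∀ ω, S ω = 0 ∨ S ω = 1) (hA01 : ∀ ω, A ω = 0 ∨ A ω = 1)
    (hPS0 : 0 < P {ω | S ω = 0}) (hPS0A0 : 0 < P {ω | S ω = 0 ∧ A ω = 0})
    (hPS1A1 : 0 < P {ω | S ω = 1 ∧ A ω = 1})
    (hPS1A0 : 0 < P {ω | S ω = 1 ∧ A ω = 0})
    (μ11 μ10 μ00 π g q : E → ℝ)
    (hμ11 : IsVersion P X Y {ω | S ω = 1 ∧ A ω = 1} μ11)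
    (hμ10 : IsVersion P X Y {ω | S ω = 1 ∧ A ω = 0} μ10)
    (hμ00 : IsVersion P X Y {ω | S ω = 0 ∧ A ω = 0} μ00)
    (hπ : IsVersion P X (fun ω => 1 - A ω) {ω | S ω = 0} π)
    (hg : IsVersion P X S Set.univ g)
    (hq : IsVersion P X A {ω | S ω = 1} q)
    (ε M : ℝ) (hε0 : 0 < ε) (hε1 : ε < 1) (hM : 1 ≤ M)
    (hbd : ∀ᵐ ω ∂P,
      ε ≤ g (X ω) ∧ g (X ω) ≤ 1 - ε ∧ ε ≤ q (X ω) ∧ q (X ω) ≤ 1 - ε ∧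
      ε ≤ |μ10 (X ω)| ∧ |μ11 (X ω)| ≤ M ∧ |μ10 (X ω)| ≤ M ∧ |μ00 (X ω)| ≤ M ∧
      |Y ω| ≤ M ∧ (1 - g (X ω)) / g (X ω) ≤ M)
    (hπbd : ∀ᵐ ω ∂P, S ω = 0 → ε ≤ π (X ω) ∧ π (X ω) ≤ 1 - ε) :
    -- (a) model multiple robustness
    (∀ m11 m10 m00 t p : E → ℝ, Admissible2 P X ε M m11 m10 m00 t p →
      ((∀ᵐ ω ∂P, m11 (X ω) / m10 (X ω) = μ11 (X ω) / μ10 (X ω) ∧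
          m00 (X ω) = μ00 (X ω)) ∨
        (∀ᵐ ω ∂P, m11 (X ω) / m10 (X ω) = μ11 (X ω) / μ10 (X ω) ∧
          p (X ω) = π (X ω)) ∨
        (∀ᵐ ω ∂P, m00 (X ω) = μ00 (X ω) ∧ m10 (X ω) = μ10 (X ω) ∧
          t (X ω) = (1 - g (X ω)) / g (X ω))) →
      ∫ ω, H2 P X S A Y q m11 m10 m00 t p ω ∂P
        = condMean P (fun ω => μ11 (X ω) / μ10 (X ω) * μ00 (X ω)) {ω | S ω = 0}) ∧
    -- (b) product-form bias bound
    (∃ C : ℝ, ∀ m11 m10 m00 t p : E → ℝ, Admissible2 P X ε M m11 m10 m00 t p →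
      |(∫ ω, H2 P X S A Y q m11 m10 m00 t p ω ∂P) -
          condMean P (fun ω => μ11 (X ω) / μ10 (X ω) * μ00 (X ω)) {ω | S ω = 0}|
        ≤ C * (normX P X (fun x => m11 x / m10 x - μ11 x / μ10 x) *
              (normX P X (fun x => m00 x - μ00 x) +
                normX P X (fun x => m10 x - μ10 x) +
                normX P X (fun x => t x - (1 - g x) / g x)) +
            normX P X (fun x => m00 x - μ00 x) *
              normX P X (fun x => p x - π x))) := by
  classical
  have hM0 : (0:ℝ) ≤ M := zero_le_one.trans hM
  have hεM : ε ≤ M := hε1.le.trans hM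
  have hε2 : ε ≤ 1 - ε := by
    have hPne : P ≠ 0 := IsProbabilityMeasure.ne_zero P
    have : (ae P).NeBot := ae_neBot.mpr hPne
    obtain ⟨ω₀, h₀⟩ := hbd.exists
    linarith [h₀.1, h₀.2.1]
  have bS : ∀ ω, |S ω| ≤ 1 := fun ω => by rcases hS01 ω with h | h <;> simp [h]
  have bA : ∀ ω, |A ω| ≤ 1 := fun ω => by rcases hA01 ω with h | h <;> simp [h]
  have b1S : ∀ ω, |1 - S ω| ≤ 1 := fun ω => by rcases hS01 ω with h | h <;> simp [h]
  have b1A : ∀ ω, |1 - A ω| ≤ 1 := fun ω => by rcases hA01 ω with h | h <;> simp [h]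
  -- measurable sets
  have hB0 : MeasurableSet {ω | S ω = 0} := hS (measurableSet_singleton 0)
  have hB1 : MeasurableSet {ω | S ω = 1} := hS (measurableSet_singleton 1)
  have hB00 : MeasurableSet {ω | S ω = 0 ∧ A ω = 0} :=
    (hS (measurableSet_singleton 0)).inter (hA (measurableSet_singleton 0))
  have hB11 : MeasurableSet {ω | S ω = 1 ∧ A ω = 1} :=
    (hS (measurableSet_singleton 1)).inter (hA (measurableSet_singleton 1))
  have hB10 : MeasurableSet {ω | S ω = 1 ∧ A ω = 0} :=
    (hS (measurableSet_singleton 1)).inter (hA (measurableSet_singleton 0))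
  -- weight facts
  have hw01 : ∀ ω ∈ {ω : Ω | S ω = 0}, (1:ℝ) - S ω = 1 := fun ω h => by
    rw [show S ω = 0 from h, sub_zero]
  have hw00 : ∀ ω : Ω, ω ∉ {ω : Ω | S ω = 0} → (1:ℝ) - S ω = 0 := fun ω h => by
    rcases hS01 ω with h1 | h1
    · exact absurd h1 h
    · rw [h1, sub_self]
  have hw11 : ∀ ω ∈ {ω : Ω | S ω = 1}, S ω = 1 := fun ω h => h
  have hw10 : ∀ ω : Ω, ω ∉ {ω : Ω | S ω = 1} → S ω = 0 := fun ω h => by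
    rcases hS01 ω with h1 | h1
    · exact h1
    · exact absurd h1 h
  have hw001 : ∀ ω ∈ {ω : Ω | S ω = 0 ∧ A ω = 0}, (1 - S ω) * (1 - A ω) = 1 := fun ω h => by
    rw [h.1, h.2]; norm_num
  have hw000 : ∀ ω : Ω, ω ∉ {ω : Ω | S ω = 0 ∧ A ω = 0} → (1 - S ω) * (1 - A ω) = 0 :=
    fun ω h => by
      rcases hS01 ω with h1 | h1
      · rcases hA01 ω with h2 | h2
        · exact absurd ⟨h1, h2⟩ h
        · rw [h2]; ring
      · rw [h1]; ring
  have hw111 : ∀ ω ∈ {ω : Ω | S ω = 1 ∧ A ω = 1}, S ω * A ω = 1 := fun ω h => by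
    rw [h.1, h.2]; norm_num
  have hw110 : ∀ ω : Ω, ω ∉ {ω : Ω | S ω = 1 ∧ A ω = 1} → S ω * A ω = 0 := fun ω h => by
    rcases hS01 ω with h1 | h1
    · rw [h1]; ring
    · rcases hA01 ω with h2 | h2
      · rw [h2]; ring
      · exact absurd ⟨h1, h2⟩ h
  have hw101 : ∀ ω ∈ {ω : Ω | S ω = 1 ∧ A ω = 0}, S ω * (1 - A ω) = 1 := fun ω h => by
    rw [h.1, h.2]; norm_num
  have hw100 : ∀ ω : Ω, ω ∉ {ω : Ω | S ω = 1 ∧ A ω = 0} → S ω * (1 - A ω) = 0 := fun ω h => by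
    rcases hS01 ω with h1 | h1
    · rw [h1]; ring
    · rcases hA01 ω with h2 | h2
      · exact absurd ⟨h1, h2⟩ h
      · rw [h2]; ring
  -- version identities in weighted form
  have Vg : ∀ h : E → ℝ, Measurable h → (∃ C, ∀ x, |h x| ≤ C) →
      ∫ ω, S ω * h (X ω) ∂P = ∫ ω, g (X ω) * h (X ω) ∂P := by
    intro h hm hb
    have base := hg.2 h hm hb
    rwa [setIntegral_univ, setIntegral_univ] at base
  have Vq : ∀ h : E → ℝ, Measurable h → (∃ C, ∀ x, |h x| ≤ C) →
      ∫ ω, S ω * (A ω * h (X ω)) ∂P = ∫ ω, S ω * (q (X ω) * h (X ω)) ∂P := by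
    intro h hm hb
    have base := hq.2 h hm hb
    rwa [weight_integral P hB1 S hw11 hw10 (fun ω => A ω * h (X ω)),
      weight_integral P hB1 S hw11 hw10 (fun ω => q (X ω) * h (X ω))] at base
  have Vpi : ∀ h : E → ℝ, Measurable h → (∃ C, ∀ x, |h x| ≤ C) →
      ∫ ω, (1 - S ω) * ((1 - A ω) * h (X ω)) ∂P
        = ∫ ω, (1 - S ω) * (π (X ω) * h (X ω)) ∂P := by
    intro h hm hb
    have base := hπ.2 h hm hb
    rwa [weight_integral P hB0 (fun ω => 1 - S ω) hw01 hw00 (fun ω => (1 - A ω) * h (X ω)),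
      weight_integral P hB0 (fun ω => 1 - S ω) hw01 hw00 (fun ω => π (X ω) * h (X ω))] at base
  have Vmu11 : ∀ h : E → ℝ, Measurable h → (∃ C, ∀ x, |h x| ≤ C) →
      ∫ ω, S ω * A ω * (Y ω * h (X ω)) ∂P = ∫ ω, S ω * A ω * (μ11 (X ω) * h (X ω)) ∂P := by
    intro h hm hb
    have base := hμ11.2 h hm hb
    rwa [weight_integral P hB11 (fun ω => S ω * A ω) hw111 hw110 (fun ω => Y ω * h (X ω)),
      weight_integral P hB11 (fun ω => S ω * A ω) hw111 hw110
        (fun ω => μ11 (X ω) * h (X ω))] at base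
  have Vmu10 : ∀ h : E → ℝ, Measurable h → (∃ C, ∀ x, |h x| ≤ C) →
      ∫ ω, S ω * (1 - A ω) * (Y ω * h (X ω)) ∂P
        = ∫ ω, S ω * (1 - A ω) * (μ10 (X ω) * h (X ω)) ∂P := by
    intro h hm hb
    have base := hμ10.2 h hm hb
    rwa [weight_integral P hB10 (fun ω => S ω * (1 - A ω)) hw101 hw100
        (fun ω => Y ω * h (X ω)),
      weight_integral P hB10 (fun ω => S ω * (1 - A ω)) hw101 hw100
        (fun ω => μ10 (X ω) * h (X ω))] at base
  have Vmu00 : ∀ h : E → ℝ, Measurable h → (∃ C, ∀ x, |h x| ≤ C) →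
      ∫ ω, (1 - S ω) * (1 - A ω) * (Y ω * h (X ω)) ∂P
        = ∫ ω, (1 - S ω) * (1 - A ω) * (μ00 (X ω) * h (X ω)) ∂P := by
    intro h hm hb
    have base := hμ00.2 h hm hb
    rwa [weight_integral P hB00 (fun ω => (1 - S ω) * (1 - A ω)) hw001 hw000
        (fun ω => Y ω * h (X ω)),
      weight_integral P hB00 (fun ω => (1 - S ω) * (1 - A ω)) hw001 hw000
        (fun ω => μ00 (X ω) * h (X ω))] at base
  -- full a.e. bounds for π
  have hπfull : ∀ᵐ ω ∂P, ε ≤ π (X ω) ∧ π (X ω) ≤ 1 - ε := by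
    set N : Set E := {x | ¬ (ε ≤ π x ∧ π x ≤ 1 - ε)} with hNd
    have hNm : MeasurableSet N :=
      ((measurableSet_le measurable_const hπ.1).inter
        (measurableSet_le hπ.1 measurable_const)).compl
    set ind : E → ℝ := fun x => if x ∈ N then 1 else 0 with hindd
    have hindm : Measurable ind := by
      rw [hindd]; exact Measurable.ite hNm measurable_const measurable_const
    have hindb : ∀ x, |ind x| ≤ 1 := fun x => by
      simp only [hindd]; split_ifs <;> simp
    have hind0 : ∀ x, 0 ≤ ind x := fun x => by
      simp only [hindd]; split_ifs <;> norm_num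
    have hVg0 := hg.2 ind hindm ⟨1, hindb⟩
    rw [setIntegral_univ, setIntegral_univ] at hVg0
    have iSind : Integrable (fun ω => S ω * ind (X ω)) P :=
      integrable_of_bddM P (hS.mul (hindm.comp hX)) (1*1)
        (fun ω => amul (bS ω) (hindb _))
    have iind : Integrable (fun ω => ind (X ω)) P :=
      integrable_of_bddM P (hindm.comp hX) 1 (fun ω => hindb _)
    have igind : Integrable (fun ω => g (X ω) * ind (X ω)) P :=
      Integrable.mono' (integrable_const 1)
        ((hg.1.comp hX).mul (hindm.comp hX)).aestronglyMeasurable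
        (hbd.mono fun ω h => by
          rw [Real.norm_eq_abs]
          exact (amul (show |g (X ω)| ≤ 1 from
              abs_le.mpr ⟨by linarith [h.1, hε0], by linarith [h.2.1]⟩)
            (hindb _)).trans (by norm_num))
    have i1gind : Integrable (fun ω => (1 - g (X ω)) * ind (X ω)) P :=
      Integrable.mono' (integrable_const 1)
        ((measurable_const.sub (hg.1.comp hX)).mul (hindm.comp hX)).aestronglyMeasurable
        (hbd.mono fun ω h => by
          rw [Real.norm_eq_abs]
          exact (amul (show |1 - g (X ω)| ≤ 1 from
              abs_le.mpr ⟨by linarith [h.2.1], by linarith [h.1, hε0]⟩)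
            (hindb _)).trans (by norm_num))
    have hL0 : ∫ ω, (1 - S ω) * ind (X ω) ∂P = 0 := by
      have hee : (fun ω => (1 - S ω) * ind (X ω))
          = ({ω | S ω = 0} ∩ X ⁻¹' N).indicator (fun _ => (1:ℝ)) := by
        funext ω
        by_cases hs : S ω = 0
        · by_cases hn : X ω ∈ N
          · rw [Set.indicator_of_mem (show ω ∈ {ω | S ω = 0} ∩ X ⁻¹' N from ⟨hs, hn⟩), hs]
            simp only [hindd]; rw [if_pos hn]; norm_num
          · rw [Set.indicator_of_notMem (show ω ∉ {ω | S ω = 0} ∩ X ⁻¹' N from fun hc => hn hc.2)]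
            simp only [hindd]; rw [if_neg hn, mul_zero]
        · rw [Set.indicator_of_notMem (show ω ∉ {ω | S ω = 0} ∩ X ⁻¹' N from fun hc => hs hc.1)]
          rcases hS01 ω with h1 | h1
          · exact absurd h1 hs
          · rw [h1]; ring
      have hnull : P ({ω | S ω = 0} ∩ X ⁻¹' N) = 0 := by
        refine measure_mono_null ?_ (ae_iff.mp hπbd)
        intro ω hω
        exact fun himp => hω.2 (himp hω.1)
      rw [hee, integral_indicator_const (1:ℝ) (hB0.inter (hX hNm)), measureReal_def, hnull]
      simp
    have hgL : ∫ ω, (1 - g (X ω)) * ind (X ω) ∂P = 0 := by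
      have h1 : ∫ ω, (1 - S ω) * ind (X ω) ∂P
          = ∫ ω, ind (X ω) ∂P - ∫ ω, S ω * ind (X ω) ∂P := by
        rw [← integral_sub iind iSind]
        exact integral_congr_ae (Filter.Eventually.of_forall fun ω => by ring)
      have h2 : ∫ ω, (1 - g (X ω)) * ind (X ω) ∂P
          = ∫ ω, ind (X ω) ∂P - ∫ ω, g (X ω) * ind (X ω) ∂P := by
        rw [← integral_sub iind igind]
        exact integral_congr_ae (Filter.Eventually.of_forall fun ω => by ring)
      rw [h2, ← hVg0, ← h1, hL0]
    have hmono : ∫ ω, ε * ind (X ω) ∂P ≤ ∫ ω, (1 - g (X ω)) * ind (X ω) ∂P := by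
      refine integral_mono_ae (iind.const_mul ε) i1gind ?_
      exact hbd.mono fun ω h => mul_le_mul_of_nonneg_right (by linarith [h.2.1]) (hind0 _)
    rw [hgL, integral_const_mul] at hmono
    have hi0 : ∫ ω, ind (X ω) ∂P = 0 :=
      le_antisymm (le_of_mul_le_mul_left (by simpa using hmono) hε0)
        (integral_nonneg fun ω => hind0 _)
    have hXN : P (X ⁻¹' N) = 0 := by
      have hee : (fun ω => ind (X ω)) = (X ⁻¹' N).indicator (fun _ => (1:ℝ)) := by
        funext ω
        by_cases hn : X ω ∈ N
        · rw [Set.indicator_of_mem (show ω ∈ X ⁻¹' N from hn)]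
          simp only [hindd]; rw [if_pos hn]
        · rw [Set.indicator_of_notMem (show ω ∉ X ⁻¹' N from hn)]
          simp only [hindd]; rw [if_neg hn]
      rw [hee, integral_indicator_const (1:ℝ) (hX hNm)] at hi0
      simp only [smul_eq_mul, mul_one, measureReal_def] at hi0
      exact ((ENNReal.toReal_eq_zero_iff _).mp hi0).resolve_right (measure_ne_top P _)
    exact (measure_eq_zero_iff_ae_notMem.mp hXN).mono fun ω h => not_not.mp h
  -- clamped versions of the nuisance functions
  set Gc : E → ℝ := fun x => if ε ≤ g x ∧ g x ≤ 1 - ε then g x else ε with hGcd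
  set Qc : E → ℝ := fun x => if ε ≤ q x ∧ q x ≤ 1 - ε then q x else ε with hQcd
  set Pic : E → ℝ := fun x => if ε ≤ π x ∧ π x ≤ 1 - ε then π x else ε with hPicd
  set U11 : E → ℝ := fun x => if |μ11 x| ≤ M then μ11 x else 0 with hU11d
  set U10 : E → ℝ := fun x => if ε ≤ |μ10 x| ∧ |μ10 x| ≤ M then μ10 x else ε with hU10d
  set U00 : E → ℝ := fun x => if |μ00 x| ≤ M then μ00 x else 0 with hU00d
  set Yc : Ω → ℝ := fun ω => if |Y ω| ≤ M then Y ω else 0 with hYcd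
  have mGc : Measurable Gc := by
    rw [hGcd]
    exact Measurable.ite ((measurableSet_le measurable_const hg.1).inter
      (measurableSet_le hg.1 measurable_const)) hg.1 measurable_const
  have mQc : Measurable Qc := by
    rw [hQcd]
    exact Measurable.ite ((measurableSet_le measurable_const hq.1).inter
      (measurableSet_le hq.1 measurable_const)) hq.1 measurable_const
  have mPic : Measurable Pic := by
    rw [hPicd]
    exact Measurable.ite ((measurableSet_le measurable_const hπ.1).inter
      (measurableSet_le hπ.1 measurable_const)) hπ.1 measurable_const
  have mU11 : Measurable U11 := by
    rw [hU11d]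
    exact Measurable.ite (measurableSet_le hμ11.1.abs measurable_const) hμ11.1 measurable_const
  have mU10 : Measurable U10 := by
    rw [hU10d]
    exact Measurable.ite ((measurableSet_le measurable_const hμ10.1.abs).inter
      (measurableSet_le hμ10.1.abs measurable_const)) hμ10.1 measurable_const
  have mU00 : Measurable U00 := by
    rw [hU00d]
    exact Measurable.ite (measurableSet_le hμ00.1.abs measurable_const) hμ00.1 measurable_const
  have mYc : Measurable Yc := by
    rw [hYcd]
    exact Measurable.ite (measurableSet_le hY.abs measurable_const) hY measurable_const
  have bGc : ∀ x, ε ≤ Gc x ∧ Gc x ≤ 1 - ε := fun x => by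
    simp only [hGcd]; split_ifs with h
    · exact h
    · exact ⟨le_rfl, hε2⟩
  have bQc : ∀ x, ε ≤ Qc x ∧ Qc x ≤ 1 - ε := fun x => by
    simp only [hQcd]; split_ifs with h
    · exact h
    · exact ⟨le_rfl, hε2⟩
  have bPic : ∀ x, ε ≤ Pic x ∧ Pic x ≤ 1 - ε := fun x => by
    simp only [hPicd]; split_ifs with h
    · exact h
    · exact ⟨le_rfl, hε2⟩
  have bU11 : ∀ x, |U11 x| ≤ M := fun x => by
    simp only [hU11d]; split_ifs with h
    · exact h
    · simpa using hM0
  have bU00 : ∀ x, |U00 x| ≤ M := fun x => by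
    simp only [hU00d]; split_ifs with h
    · exact h
    · simpa using hM0
  have bU10 : ∀ x, ε ≤ |U10 x| ∧ |U10 x| ≤ M := fun x => by
    simp only [hU10d]; split_ifs with h
    · exact h
    · rw [abs_of_pos hε0]; exact ⟨le_rfl, hεM⟩
  have bYc : ∀ ω, |Yc ω| ≤ M := fun ω => by
    simp only [hYcd]; split_ifs with h
    · exact h
    · simpa using hM0
  have bGc1 : ∀ x, |Gc x| ≤ 1 := fun x =>
    abs_le.mpr ⟨by linarith [(bGc x).1, hε0], by linarith [(bGc x).2]⟩
  have bQc1 : ∀ x, |Qc x| ≤ 1 := fun x =>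
    abs_le.mpr ⟨by linarith [(bQc x).1, hε0], by linarith [(bQc x).2]⟩
  have bPic1 : ∀ x, |Pic x| ≤ 1 := fun x =>
    abs_le.mpr ⟨by linarith [(bPic x).1, hε0], by linarith [(bPic x).2]⟩
  have bQcabs : ∀ x, ε ≤ |Qc x| := fun x => (bQc x).1.trans (le_abs_self _)
  have b1Qcabs : ∀ x, ε ≤ |1 - Qc x| := fun x =>
    (show ε ≤ 1 - Qc x by linarith [(bQc x).2]).trans (le_abs_self _)
  have bGcabs : ∀ x, ε ≤ |Gc x| := fun x => (bGc x).1.trans (le_abs_self _)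
  have bρc : ∀ x, |U11 x / U10 x| ≤ M / ε := fun x => adiv (bU11 x) hε0 (bU10 x).1
  have bτc : ∀ x, |(1 - Gc x) / Gc x| ≤ 1 / ε := fun x =>
    adiv (abs_le.mpr ⟨by linarith [(bGc x).2], by linarith [(bGc x).1, hε0]⟩) hε0 (bGcabs x)
  have nzU10 : ∀ x, U10 x ≠ 0 := fun x => nz_of_eps hε0 (bU10 x).1
  have nzQc : ∀ x, Qc x ≠ 0 := fun x => nz_of_eps hε0 (bQcabs x)
  have nz1Qc : ∀ x, 1 - Qc x ≠ 0 := fun x => nz_of_eps hε0 (b1Qcabs x)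
  have nzGc : ∀ x, Gc x ≠ 0 := fun x => nz_of_eps hε0 (bGcabs x)
  have aeg : ∀ᵐ ω ∂P, Gc (X ω) = g (X ω) := hbd.mono fun ω h => by
    simp only [hGcd]; rw [if_pos (⟨h.1, h.2.1⟩ : _ ∧ _)]
  have aeq : ∀ᵐ ω ∂P, Qc (X ω) = q (X ω) := hbd.mono fun ω h => by
    simp only [hQcd]; rw [if_pos (⟨h.2.2.1, h.2.2.2.1⟩ : _ ∧ _)]
  have aepi : ∀ᵐ ω ∂P, Pic (X ω) = π (X ω) := hπfull.mono fun ω h => by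
    simp only [hPicd]; rw [if_pos h]
  have aeu11 : ∀ᵐ ω ∂P, U11 (X ω) = μ11 (X ω) := hbd.mono fun ω h => by
    simp only [hU11d]; rw [if_pos h.2.2.2.2.2.1]
  have aeu10 : ∀ᵐ ω ∂P, U10 (X ω) = μ10 (X ω) := hbd.mono fun ω h => by
    simp only [hU10d]; rw [if_pos (⟨h.2.2.2.2.1, h.2.2.2.2.2.2.1⟩ : _ ∧ _)]
  have aeu00 : ∀ᵐ ω ∂P, U00 (X ω) = μ00 (X ω) := hbd.mono fun ω h => by
    simp only [hU00d]; rw [if_pos h.2.2.2.2.2.2.2.1]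
  have aeY : ∀ᵐ ω ∂P, Yc ω = Y ω := hbd.mono fun ω h => by
    simp only [hYcd]; rw [if_pos h.2.2.2.2.2.2.2.2.1]
  have hκ0 : (0:ℝ) ≤ (P {ω | S ω = 0}).toReal⁻¹ := inv_nonneg.mpr ENNReal.toReal_nonneg
  have normX_zero : ∀ f : E → ℝ, (∀ᵐ ω ∂P, f (X ω) = 0) → normX P X f = 0 := by
    intro f hf
    show Real.sqrt (∫ ω, f (X ω) ^ 2 ∂P) = 0
    rw [integral_eq_zero_of_ae (hf.mono fun ω h => by simp [h]), Real.sqrt_zero]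
  have main : ∀ m11' m10' m00' t' p' : E → ℝ, Admissible2 P X ε M m11' m10' m00' t' p' →
      |(∫ ω, H2 P X S A Y q m11' m10' m00' t' p' ω ∂P) -
          condMean P (fun ω => μ11 (X ω) / μ10 (X ω) * μ00 (X ω)) {ω | S ω = 0}|
        ≤ (P {ω | S ω = 0}).toReal⁻¹ * (M ^ 2 / ε ^ 2) *
            (normX P X (fun x => m11' x / m10' x - μ11 x / μ10 x) *
              (normX P X (fun x => m00' x - μ00 x) +
                normX P X (fun x => m10' x - μ10 x) +
                normX P X (fun x => t' x - (1 - g x) / g x)) +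
            normX P X (fun x => m00' x - μ00 x) *
              normX P X (fun x => p' x - π x)) := by
    intro m11' m10' m00' t' p' hadm
    obtain ⟨hm11m, hm10m, hm00m, htm, hpm, hpb, hmbd⟩ := hadm
    set V11 : E → ℝ := fun x => if |m11' x| ≤ M then m11' x else 0 with hV11d
    set V10 : E → ℝ := fun x => if ε ≤ |m10' x| ∧ |m10' x| ≤ M then m10' x else ε with hV10d
    set V00 : E → ℝ := fun x => if |m00' x| ≤ M then m00' x else 0 with hV00d
    set Tc : E → ℝ := fun x => if 0 ≤ t' x ∧ t' x ≤ M then t' x else 0 with hTcd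
    have mV11 : Measurable V11 := by
      rw [hV11d]
      exact Measurable.ite (measurableSet_le hm11m.abs measurable_const) hm11m measurable_const
    have mV10 : Measurable V10 := by
      rw [hV10d]
      exact Measurable.ite ((measurableSet_le measurable_const hm10m.abs).inter
        (measurableSet_le hm10m.abs measurable_const)) hm10m measurable_const
    have mV00 : Measurable V00 := by
      rw [hV00d]
      exact Measurable.ite (measurableSet_le hm00m.abs measurable_const) hm00m measurable_const
    have mTc : Measurable Tc := by
      rw [hTcd]
      exact Measurable.ite ((measurableSet_le measurable_const htm).inter
        (measurableSet_le htm measurable_const)) htm measurable_const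
    have bV11 : ∀ x, |V11 x| ≤ M := fun x => by
      simp only [hV11d]; split_ifs with h
      · exact h
      · simpa using hM0
    have bV00 : ∀ x, |V00 x| ≤ M := fun x => by
      simp only [hV00d]; split_ifs with h
      · exact h
      · simpa using hM0
    have bV10 : ∀ x, ε ≤ |V10 x| ∧ |V10 x| ≤ M := fun x => by
      simp only [hV10d]; split_ifs with h
      · exact h
      · rw [abs_of_pos hε0]; exact ⟨le_rfl, hεM⟩
    have bTc : ∀ x, 0 ≤ Tc x ∧ Tc x ≤ M := fun x => by
      simp only [hTcd]; split_ifs with h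
      · exact h
      · exact ⟨le_rfl, hM0⟩
    have bTcabs : ∀ x, |Tc x| ≤ M := fun x =>
      abs_le.mpr ⟨by linarith [(bTc x).1, hM0], (bTc x).2⟩
    have bp1 : ∀ x, |p' x| ≤ 1 := fun x =>
      abs_le.mpr ⟨by linarith [(hpb x).1, hε0], by linarith [(hpb x).2]⟩
    have bpabs : ∀ x, ε ≤ |p' x| := fun x => (hpb x).1.trans (le_abs_self _)
    have nzV10 : ∀ x, V10 x ≠ 0 := fun x => nz_of_eps hε0 (bV10 x).1
    have nzp : ∀ x, p' x ≠ 0 := fun x => nz_of_eps hε0 (bpabs x)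
    have brc : ∀ x, |V11 x / V10 x| ≤ M / ε := fun x => adiv (bV11 x) hε0 (bV10 x).1
    have bcc : ∀ x, |V00 x / V10 x| ≤ M / ε := fun x => adiv (bV00 x) hε0 (bV10 x).1
    have aev11 : ∀ᵐ ω ∂P, V11 (X ω) = m11' (X ω) := hmbd.mono fun ω h => by
      simp only [hV11d]; rw [if_pos h.2.1]
    have aev10 : ∀ᵐ ω ∂P, V10 (X ω) = m10' (X ω) := hmbd.mono fun ω h => by
      simp only [hV10d]; rw [if_pos (⟨h.1, h.2.2.1⟩ : _ ∧ _)]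
    have aev00 : ∀ᵐ ω ∂P, V00 (X ω) = m00' (X ω) := hmbd.mono fun ω h => by
      simp only [hV00d]; rw [if_pos h.2.2.2.1]
    have aet : ∀ᵐ ω ∂P, Tc (X ω) = t' (X ω) := hmbd.mono fun ω h => by
      simp only [hTcd]; rw [if_pos (⟨h.2.2.2.2.1, h.2.2.2.2.2⟩ : _ ∧ _)]
    -- the h-functions fed into the conditional-expectation identities
    set h1 : E → ℝ := fun x => V11 x / V10 x / p' x with hh1d
    set h2 : E → ℝ := fun x => V11 x / V10 x / p' x * (U00 x - V00 x) with hh2d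
    set h3 : E → ℝ := fun x => Tc x * (V00 x / V10 x) / Qc x with hh3d
    set h4 : E → ℝ := fun x => Tc x * (V00 x / V10 x) / Qc x * (U11 x - V11 x) with hh4d
    set h5 : E → ℝ := fun x => Tc x * (V00 x / V10 x) * (V11 x / V10 x) / (1 - Qc x) with hh5d
    set h6 : E → ℝ := fun x =>
      Tc x * (V00 x / V10 x) * (V11 x / V10 x) / (1 - Qc x) * (U10 x - V10 x) with hh6d
    set h7 : E → ℝ :=
      fun x => Tc x * (V00 x / V10 x) * U10 x * (U11 x / U10 x - V11 x / V10 x) with hh7d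
    set h8 : E → ℝ := fun x => V00 x / V10 x * U10 x * (U11 x / U10 x - V11 x / V10 x) with hh8d
    have mh1 : Measurable h1 := by rw [hh1d]; exact (mV11.div mV10).div hpm
    have mh2 : Measurable h2 := by rw [hh2d]; exact ((mV11.div mV10).div hpm).mul (mU00.sub mV00)
    have mh3 : Measurable h3 := by rw [hh3d]; exact (mTc.mul (mV00.div mV10)).div mQc
    have mh4 : Measurable h4 := by
      rw [hh4d]; exact ((mTc.mul (mV00.div mV10)).div mQc).mul (mU11.sub mV11)
    have mh5 : Measurable h5 := by
      rw [hh5d]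
      exact ((mTc.mul (mV00.div mV10)).mul (mV11.div mV10)).div (measurable_const.sub mQc)
    have mh6 : Measurable h6 := by
      rw [hh6d]
      exact (((mTc.mul (mV00.div mV10)).mul (mV11.div mV10)).div
        (measurable_const.sub mQc)).mul (mU10.sub mV10)
    have mh7 : Measurable h7 := by
      rw [hh7d]
      exact ((mTc.mul (mV00.div mV10)).mul mU10).mul ((mU11.div mU10).sub (mV11.div mV10))
    have mh8 : Measurable h8 := by
      rw [hh8d]
      exact (((mV00.div mV10)).mul mU10).mul ((mU11.div mU10).sub (mV11.div mV10))
    have bh1 : ∀ x, |h1 x| ≤ M / ε / ε := fun x => by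
      simp only [hh1d]; exact adiv (adiv (bV11 x) hε0 (bV10 x).1) hε0 (bpabs x)
    have bh2 : ∀ x, |h2 x| ≤ M / ε / ε * (M + M) := fun x => by
      simp only [hh2d]
      exact amul (adiv (adiv (bV11 x) hε0 (bV10 x).1) hε0 (bpabs x))
        (asub (bU00 x) (bV00 x))
    have bh3 : ∀ x, |h3 x| ≤ M * (M / ε) / ε := fun x => by
      simp only [hh3d]
      exact adiv (amul (bTcabs x) (adiv (bV00 x) hε0 (bV10 x).1)) hε0 (bQcabs x)
    have bh4 : ∀ x, |h4 x| ≤ M * (M / ε) / ε * (M + M) := fun x => by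
      simp only [hh4d]
      exact amul (adiv (amul (bTcabs x) (adiv (bV00 x) hε0 (bV10 x).1)) hε0 (bQcabs x))
        (asub (bU11 x) (bV11 x))
    have bh5 : ∀ x, |h5 x| ≤ M * (M / ε) * (M / ε) / ε := fun x => by
      simp only [hh5d]
      exact adiv (amul (amul (bTcabs x) (adiv (bV00 x) hε0 (bV10 x).1))
        (adiv (bV11 x) hε0 (bV10 x).1)) hε0 (b1Qcabs x)
    have bh6 : ∀ x, |h6 x| ≤ M * (M / ε) * (M / ε) / ε * (M + M) := fun x => by
      simp only [hh6d]
      exact amul (adiv (amul (amul (bTcabs x) (adiv (bV00 x) hε0 (bV10 x).1))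
        (adiv (bV11 x) hε0 (bV10 x).1)) hε0 (b1Qcabs x)) (asub (bU10 x).2 (bV10 x).2)
    have bh7 : ∀ x, |h7 x| ≤ M * (M / ε) * M * (M / ε + M / ε) := fun x => by
      simp only [hh7d]
      exact amul (amul (amul (bTcabs x) (adiv (bV00 x) hε0 (bV10 x).1)) (bU10 x).2)
        (asub (adiv (bU11 x) hε0 (bU10 x).1) (adiv (bV11 x) hε0 (bV10 x).1))
    have bh8 : ∀ x, |h8 x| ≤ M / ε * M * (M / ε + M / ε) := fun x => by
      simp only [hh8d]
      exact amul (amul (adiv (bV00 x) hε0 (bV10 x).1) (bU10 x).2)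
        (asub (adiv (bU11 x) hε0 (bU10 x).1) (adiv (bV11 x) hε0 (bV10 x).1))
    -- integrand functions
    set Phi : Ω → ℝ := fun ω =>
      (1 - S ω) * (V11 (X ω) / V10 (X ω)) *
          (V00 (X ω) + (1 - A ω) / p' (X ω) * (Yc ω - V00 (X ω))) +
        S ω * Tc (X ω) * (V00 (X ω) / V10 (X ω)) *
          (A ω / Qc (X ω) * (Yc ω - V11 (X ω)) -
            (1 - A ω) / (1 - Qc (X ω)) * (V11 (X ω) / V10 (X ω)) * (Yc ω - V10 (X ω))) with hPhid
    set T0 : Ω → ℝ := fun ω => (1 - S ω) * (U11 (X ω) / U10 (X ω)) * U00 (X ω) with hT0d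
    set j1 : Ω → ℝ := fun ω =>
      (1 - S ω) * (V11 (X ω) / V10 (X ω) - U11 (X ω) / U10 (X ω)) *
        (U00 (X ω) - V00 (X ω)) with hj1d
    set j2 : Ω → ℝ := fun ω =>
      (1 - S ω) * (V11 (X ω) / V10 (X ω) - U11 (X ω) / U10 (X ω)) *
        (V00 (X ω) / V10 (X ω)) * (V10 (X ω) - U10 (X ω)) with hj2d
    set j3 : Ω → ℝ := fun ω =>
      (1 - S ω) * (V11 (X ω) / V10 (X ω)) * ((Pic (X ω) - p' (X ω)) / p' (X ω)) *
        (U00 (X ω) - V00 (X ω)) with hj3d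
    set j4 : Ω → ℝ := fun ω =>
      Gc (X ω) * (Tc (X ω) - (1 - Gc (X ω)) / Gc (X ω)) * (V00 (X ω) / V10 (X ω)) *
        U10 (X ω) * (U11 (X ω) / U10 (X ω) - V11 (X ω) / V10 (X ω)) with hj4d
    set D1 : Ω → ℝ := fun ω =>
      (1 - S ω) * (1 - A ω) * (Yc ω * h1 (X ω))
        - (1 - S ω) * (1 - A ω) * (U00 (X ω) * h1 (X ω)) with hD1d
    set D2 : Ω → ℝ := fun ω =>
      (1 - S ω) * ((1 - A ω) * h2 (X ω)) - (1 - S ω) * (Pic (X ω) * h2 (X ω)) with hD2d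
    set D3 : Ω → ℝ := fun ω =>
      S ω * A ω * (Yc ω * h3 (X ω)) - S ω * A ω * (U11 (X ω) * h3 (X ω)) with hD3d
    set D4 : Ω → ℝ := fun ω =>
      S ω * (A ω * h4 (X ω)) - S ω * (Qc (X ω) * h4 (X ω)) with hD4d
    set D5 : Ω → ℝ := fun ω =>
      S ω * (1 - A ω) * (U10 (X ω) * h5 (X ω))
        - S ω * (1 - A ω) * (Yc ω * h5 (X ω)) with hD5d
    set D6 : Ω → ℝ := fun ω =>
      S ω * (A ω * h6 (X ω)) - S ω * (Qc (X ω) * h6 (X ω)) with hD6d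
    set D7 : Ω → ℝ := fun ω => S ω * h7 (X ω) - Gc (X ω) * h7 (X ω) with hD7d
    set D8 : Ω → ℝ := fun ω => S ω * h8 (X ω) - Gc (X ω) * h8 (X ω) with hD8d
    have hpt : ∀ ω, Phi ω = T0 ω + j1 ω + j2 ω + j3 ω + j4 ω + D1 ω + D2 ω + D3 ω + D4 ω
        + D5 ω + D6 ω + D7 ω + D8 ω := by
      intro ω
      simp only [hPhid, hT0d, hj1d, hj2d, hj3d, hj4d, hD1d, hD2d, hD3d, hD4d, hD5d, hD6d,
        hD7d, hD8d, hh1d, hh2d, hh3d, hh4d, hh5d, hh6d, hh7d, hh8d]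
      exact key_identity (S ω) (A ω) (Yc ω) (p' (X ω)) (Qc (X ω)) (Gc (X ω)) (Tc (X ω))
        (Pic (X ω)) (V11 (X ω)) (V10 (X ω)) (V00 (X ω)) (U11 (X ω)) (U10 (X ω)) (U00 (X ω))
        (nzV10 (X ω)) (nzU10 (X ω)) (nzp (X ω)) (nzQc (X ω)) (nz1Qc (X ω)) (nzGc (X ω))
    -- integrability
    have cX11 : Measurable fun ω => V11 (X ω) / V10 (X ω) := (mV11.comp hX).div (mV10.comp hX)
    have cXr : Measurable fun ω => V11 (X ω) / V10 (X ω) - U11 (X ω) / U10 (X ω) :=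
      cX11.sub ((mU11.comp hX).div (mU10.comp hX))
    have cXc : Measurable fun ω => V00 (X ω) / V10 (X ω) := (mV00.comp hX).div (mV10.comp hX)
    have iT0 : Integrable T0 P := by
      rw [hT0d]
      exact integrable_of_bddM P
        (((measurable_const.sub hS).mul ((mU11.comp hX).div (mU10.comp hX))).mul
          (mU00.comp hX)) _
        (fun ω => amul (amul (b1S ω) (bρc (X ω))) (bU00 (X ω)))
    have ij1 : Integrable j1 P := by
      rw [hj1d]
      exact integrable_of_bddM P
        (((measurable_const.sub hS).mul cXr).mul ((mU00.comp hX).sub (mV00.comp hX))) _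
        (fun ω => amul (amul (b1S ω) (asub (brc (X ω)) (bρc (X ω))))
          (asub (bU00 (X ω)) (bV00 (X ω))))
    have ij2 : Integrable j2 P := by
      rw [hj2d]
      exact integrable_of_bddM P
        ((((measurable_const.sub hS).mul cXr).mul cXc).mul
          ((mV10.comp hX).sub (mU10.comp hX))) _
        (fun ω => amul (amul (amul (b1S ω) (asub (brc (X ω)) (bρc (X ω)))) (bcc (X ω)))
          (asub (bV10 (X ω)).2 (bU10 (X ω)).2))
    have ij3 : Integrable j3 P := by
      rw [hj3d]
      exact integrable_of_bddM P
        ((((measurable_const.sub hS).mul cX11).mul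
          (((mPic.comp hX).sub (hpm.comp hX)).div (hpm.comp hX))).mul
          ((mU00.comp hX).sub (mV00.comp hX))) _
        (fun ω => amul (amul (amul (b1S ω) (brc (X ω)))
          (adiv (asub (bPic1 (X ω)) (bp1 (X ω))) hε0 (bpabs (X ω))))
          (asub (bU00 (X ω)) (bV00 (X ω))))
    have ij4 : Integrable j4 P := by
      rw [hj4d]
      exact integrable_of_bddM P
        (((((mGc.comp hX).mul ((mTc.comp hX).sub
            (((measurable_const.sub mGc).div mGc).comp hX))).mul cXc).mul
          (mU10.comp hX)).mul (((mU11.comp hX).div (mU10.comp hX)).sub cX11)) _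
        (fun ω => amul (amul (amul (amul (bGc1 (X ω)) (asub (bTcabs (X ω)) (bτc (X ω))))
          (bcc (X ω))) (bU10 (X ω)).2) (asub (bρc (X ω)) (brc (X ω))))
    have iL1 : Integrable (fun ω => (1 - S ω) * (1 - A ω) * (Yc ω * h1 (X ω))) P :=
      integrable_of_bddM P
        (((measurable_const.sub hS).mul (measurable_const.sub hA)).mul
          (mYc.mul (mh1.comp hX))) _
        (fun ω => amul (amul (b1S ω) (b1A ω)) (amul (bYc ω) (bh1 (X ω))))
    have iR1 : Integrable (fun ω => (1 - S ω) * (1 - A ω) * (U00 (X ω) * h1 (X ω))) P :=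
      integrable_of_bddM P
        (((measurable_const.sub hS).mul (measurable_const.sub hA)).mul
          ((mU00.comp hX).mul (mh1.comp hX))) _
        (fun ω => amul (amul (b1S ω) (b1A ω)) (amul (bU00 (X ω)) (bh1 (X ω))))
    have iL2 : Integrable (fun ω => (1 - S ω) * ((1 - A ω) * h2 (X ω))) P :=
      integrable_of_bddM P
        ((measurable_const.sub hS).mul ((measurable_const.sub hA).mul (mh2.comp hX))) _
        (fun ω => amul (b1S ω) (amul (b1A ω) (bh2 (X ω))))
    have iR2 : Integrable (fun ω => (1 - S ω) * (Pic (X ω) * h2 (X ω))) P :=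
      integrable_of_bddM P
        ((measurable_const.sub hS).mul ((mPic.comp hX).mul (mh2.comp hX))) _
        (fun ω => amul (b1S ω) (amul (bPic1 (X ω)) (bh2 (X ω))))
    have iL3 : Integrable (fun ω => S ω * A ω * (Yc ω * h3 (X ω))) P :=
      integrable_of_bddM P ((hS.mul hA).mul (mYc.mul (mh3.comp hX))) _
        (fun ω => amul (amul (bS ω) (bA ω)) (amul (bYc ω) (bh3 (X ω))))
    have iR3 : Integrable (fun ω => S ω * A ω * (U11 (X ω) * h3 (X ω))) P :=
      integrable_of_bddM P ((hS.mul hA).mul ((mU11.comp hX).mul (mh3.comp hX))) _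
        (fun ω => amul (amul (bS ω) (bA ω)) (amul (bU11 (X ω)) (bh3 (X ω))))
    have iL4 : Integrable (fun ω => S ω * (A ω * h4 (X ω))) P :=
      integrable_of_bddM P (hS.mul (hA.mul (mh4.comp hX))) _
        (fun ω => amul (bS ω) (amul (bA ω) (bh4 (X ω))))
    have iR4 : Integrable (fun ω => S ω * (Qc (X ω) * h4 (X ω))) P :=
      integrable_of_bddM P (hS.mul ((mQc.comp hX).mul (mh4.comp hX))) _
        (fun ω => amul (bS ω) (amul (bQc1 (X ω)) (bh4 (X ω))))
    have iL5 : Integrable (fun ω => S ω * (1 - A ω) * (U10 (X ω) * h5 (X ω))) P :=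
      integrable_of_bddM P
        ((hS.mul (measurable_const.sub hA)).mul ((mU10.comp hX).mul (mh5.comp hX))) _
        (fun ω => amul (amul (bS ω) (b1A ω)) (amul (bU10 (X ω)).2 (bh5 (X ω))))
    have iR5 : Integrable (fun ω => S ω * (1 - A ω) * (Yc ω * h5 (X ω))) P :=
      integrable_of_bddM P
        ((hS.mul (measurable_const.sub hA)).mul (mYc.mul (mh5.comp hX))) _
        (fun ω => amul (amul (bS ω) (b1A ω)) (amul (bYc ω) (bh5 (X ω))))
    have iL6 : Integrable (fun ω => S ω * (A ω * h6 (X ω))) P :=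
      integrable_of_bddM P (hS.mul (hA.mul (mh6.comp hX))) _
        (fun ω => amul (bS ω) (amul (bA ω) (bh6 (X ω))))
    have iR6 : Integrable (fun ω => S ω * (Qc (X ω) * h6 (X ω))) P :=
      integrable_of_bddM P (hS.mul ((mQc.comp hX).mul (mh6.comp hX))) _
        (fun ω => amul (bS ω) (amul (bQc1 (X ω)) (bh6 (X ω))))
    have iL7 : Integrable (fun ω => S ω * h7 (X ω)) P :=
      integrable_of_bddM P (hS.mul (mh7.comp hX)) _ (fun ω => amul (bS ω) (bh7 (X ω)))
    have iR7 : Integrable (fun ω => Gc (X ω) * h7 (X ω)) P :=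
      integrable_of_bddM P ((mGc.comp hX).mul (mh7.comp hX)) _
        (fun ω => amul (bGc1 (X ω)) (bh7 (X ω)))
    have iL8 : Integrable (fun ω => S ω * h8 (X ω)) P :=
      integrable_of_bddM P (hS.mul (mh8.comp hX)) _ (fun ω => amul (bS ω) (bh8 (X ω)))
    have iR8 : Integrable (fun ω => Gc (X ω) * h8 (X ω)) P :=
      integrable_of_bddM P ((mGc.comp hX).mul (mh8.comp hX)) _
        (fun ω => amul (bGc1 (X ω)) (bh8 (X ω)))
    have iD1 : Integrable D1 P := by rw [hD1d]; exact iL1.sub iR1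
    have iD2 : Integrable D2 P := by rw [hD2d]; exact iL2.sub iR2
    have iD3 : Integrable D3 P := by rw [hD3d]; exact iL3.sub iR3
    have iD4 : Integrable D4 P := by rw [hD4d]; exact iL4.sub iR4
    have iD5 : Integrable D5 P := by rw [hD5d]; exact iL5.sub iR5
    have iD6 : Integrable D6 P := by rw [hD6d]; exact iL6.sub iR6
    have iD7 : Integrable D7 P := by rw [hD7d]; exact iL7.sub iR7
    have iD8 : Integrable D8 P := by rw [hD8d]; exact iL8.sub iR8
    -- split of the integral of Phi
    have s1 : Integrable (fun ω => T0 ω + j1 ω) P := iT0.add ij1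
    have s2 : Integrable (fun ω => T0 ω + j1 ω + j2 ω) P := s1.add ij2
    have s3 : Integrable (fun ω => T0 ω + j1 ω + j2 ω + j3 ω) P := s2.add ij3
    have s4 : Integrable (fun ω => T0 ω + j1 ω + j2 ω + j3 ω + j4 ω) P := s3.add ij4
    have s5 : Integrable (fun ω => T0 ω + j1 ω + j2 ω + j3 ω + j4 ω + D1 ω) P := s4.add iD1
    have s6 : Integrable (fun ω => T0 ω + j1 ω + j2 ω + j3 ω + j4 ω + D1 ω + D2 ω) P :=
      s5.add iD2
    have s7 : Integrable (fun ω => T0 ω + j1 ω + j2 ω + j3 ω + j4 ω + D1 ω + D2 ω + D3 ω) P :=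
      s6.add iD3
    have s8 : Integrable
        (fun ω => T0 ω + j1 ω + j2 ω + j3 ω + j4 ω + D1 ω + D2 ω + D3 ω + D4 ω) P :=
      s7.add iD4
    have s9 : Integrable
        (fun ω => T0 ω + j1 ω + j2 ω + j3 ω + j4 ω + D1 ω + D2 ω + D3 ω + D4 ω + D5 ω) P :=
      s8.add iD5
    have s10 : Integrable
        (fun ω => T0 ω + j1 ω + j2 ω + j3 ω + j4 ω + D1 ω + D2 ω + D3 ω + D4 ω + D5 ω
          + D6 ω) P := s9.add iD6
    have s11 : Integrable
        (fun ω => T0 ω + j1 ω + j2 ω + j3 ω + j4 ω + D1 ω + D2 ω + D3 ω + D4 ω + D5 ω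
          + D6 ω + D7 ω) P := s10.add iD7
    have hsplit : ∫ ω, Phi ω ∂P = ∫ ω, T0 ω ∂P + ∫ ω, j1 ω ∂P + ∫ ω, j2 ω ∂P
        + ∫ ω, j3 ω ∂P + ∫ ω, j4 ω ∂P + ∫ ω, D1 ω ∂P + ∫ ω, D2 ω ∂P + ∫ ω, D3 ω ∂P
        + ∫ ω, D4 ω ∂P + ∫ ω, D5 ω ∂P + ∫ ω, D6 ω ∂P + ∫ ω, D7 ω ∂P + ∫ ω, D8 ω ∂P := by
      simp only [funext hpt]
      rw [integral_add s11 iD8, integral_add s10 iD7, integral_add s9 iD6,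
        integral_add s8 iD5, integral_add s7 iD4, integral_add s6 iD3, integral_add s5 iD2,
        integral_add s4 iD1, integral_add s3 ij4, integral_add s2 ij3, integral_add s1 ij2,
        integral_add iT0 ij1]
    -- the D-terms integrate to zero
    have hD1 : ∫ ω, D1 ω ∂P = 0 := by
      simp only [hD1d]
      rw [integral_sub iL1 iR1, sub_eq_zero]
      calc ∫ ω, (1 - S ω) * (1 - A ω) * (Yc ω * h1 (X ω)) ∂P
          = ∫ ω, (1 - S ω) * (1 - A ω) * (Y ω * h1 (X ω)) ∂P :=
            integral_congr_ae (by filter_upwards [aeY] with ω e; rw [e])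
        _ = ∫ ω, (1 - S ω) * (1 - A ω) * (μ00 (X ω) * h1 (X ω)) ∂P :=
            Vmu00 h1 mh1 ⟨_, bh1⟩
        _ = ∫ ω, (1 - S ω) * (1 - A ω) * (U00 (X ω) * h1 (X ω)) ∂P :=
            integral_congr_ae (by filter_upwards [aeu00] with ω e; rw [e])
    have hD2 : ∫ ω, D2 ω ∂P = 0 := by
      simp only [hD2d]
      rw [integral_sub iL2 iR2, sub_eq_zero]
      calc ∫ ω, (1 - S ω) * ((1 - A ω) * h2 (X ω)) ∂P
          = ∫ ω, (1 - S ω) * (π (X ω) * h2 (X ω)) ∂P := Vpi h2 mh2 ⟨_, bh2⟩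
        _ = ∫ ω, (1 - S ω) * (Pic (X ω) * h2 (X ω)) ∂P :=
            integral_congr_ae (by filter_upwards [aepi] with ω e; rw [e])
    have hD3 : ∫ ω, D3 ω ∂P = 0 := by
      simp only [hD3d]
      rw [integral_sub iL3 iR3, sub_eq_zero]
      calc ∫ ω, S ω * A ω * (Yc ω * h3 (X ω)) ∂P
          = ∫ ω, S ω * A ω * (Y ω * h3 (X ω)) ∂P :=
            integral_congr_ae (by filter_upwards [aeY] with ω e; rw [e])
        _ = ∫ ω, S ω * A ω * (μ11 (X ω) * h3 (X ω)) ∂P := Vmu11 h3 mh3 ⟨_, bh3⟩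
        _ = ∫ ω, S ω * A ω * (U11 (X ω) * h3 (X ω)) ∂P :=
            integral_congr_ae (by filter_upwards [aeu11] with ω e; rw [e])
    have hD4 : ∫ ω, D4 ω ∂P = 0 := by
      simp only [hD4d]
      rw [integral_sub iL4 iR4, sub_eq_zero]
      calc ∫ ω, S ω * (A ω * h4 (X ω)) ∂P
          = ∫ ω, S ω * (q (X ω) * h4 (X ω)) ∂P := Vq h4 mh4 ⟨_, bh4⟩
        _ = ∫ ω, S ω * (Qc (X ω) * h4 (X ω)) ∂P :=
            integral_congr_ae (by filter_upwards [aeq] with ω e; rw [e])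
    have hD5 : ∫ ω, D5 ω ∂P = 0 := by
      simp only [hD5d]
      rw [integral_sub iL5 iR5, sub_eq_zero]
      calc ∫ ω, S ω * (1 - A ω) * (U10 (X ω) * h5 (X ω)) ∂P
          = ∫ ω, S ω * (1 - A ω) * (μ10 (X ω) * h5 (X ω)) ∂P :=
            integral_congr_ae (by filter_upwards [aeu10] with ω e; rw [e])
        _ = ∫ ω, S ω * (1 - A ω) * (Y ω * h5 (X ω)) ∂P := (Vmu10 h5 mh5 ⟨_, bh5⟩).symm
        _ = ∫ ω, S ω * (1 - A ω) * (Yc ω * h5 (X ω)) ∂P :=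
            integral_congr_ae (by filter_upwards [aeY] with ω e; rw [e])
    have hD6 : ∫ ω, D6 ω ∂P = 0 := by
      simp only [hD6d]
      rw [integral_sub iL6 iR6, sub_eq_zero]
      calc ∫ ω, S ω * (A ω * h6 (X ω)) ∂P
          = ∫ ω, S ω * (q (X ω) * h6 (X ω)) ∂P := Vq h6 mh6 ⟨_, bh6⟩
        _ = ∫ ω, S ω * (Qc (X ω) * h6 (X ω)) ∂P :=
            integral_congr_ae (by filter_upwards [aeq] with ω e; rw [e])
    have hD7 : ∫ ω, D7 ω ∂P = 0 := by
      simp only [hD7d]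
      rw [integral_sub iL7 iR7, sub_eq_zero]
      calc ∫ ω, S ω * h7 (X ω) ∂P
          = ∫ ω, g (X ω) * h7 (X ω) ∂P := Vg h7 mh7 ⟨_, bh7⟩
        _ = ∫ ω, Gc (X ω) * h7 (X ω) ∂P :=
            integral_congr_ae (by filter_upwards [aeg] with ω e; rw [e])
    have hD8 : ∫ ω, D8 ω ∂P = 0 := by
      simp only [hD8d]
      rw [integral_sub iL8 iR8, sub_eq_zero]
      calc ∫ ω, S ω * h8 (X ω) ∂P
          = ∫ ω, g (X ω) * h8 (X ω) ∂P := Vg h8 mh8 ⟨_, bh8⟩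
        _ = ∫ ω, Gc (X ω) * h8 (X ω) ∂P :=
            integral_congr_ae (by filter_upwards [aeg] with ω e; rw [e])
    -- relate to the original integrals
    have hH2 : ∫ ω, H2 P X S A Y q m11' m10' m00' t' p' ω ∂P
        = (P {ω | S ω = 0}).toReal⁻¹ * ∫ ω, Phi ω ∂P := by
      have hb : ∫ ω, ((1 - S ω) * (m11' (X ω) / m10' (X ω)) *
              (m00' (X ω) + (1 - A ω) / p' (X ω) * (Y ω - m00' (X ω))) +
            S ω * t' (X ω) * (m00' (X ω) / m10' (X ω)) *
              (A ω / q (X ω) * (Y ω - m11' (X ω)) -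
                (1 - A ω) / (1 - q (X ω)) * (m11' (X ω) / m10' (X ω)) *
                  (Y ω - m10' (X ω)))) ∂P = ∫ ω, Phi ω ∂P := by
        refine integral_congr_ae ?_
        filter_upwards [aeq, aev11, aev10, aev00, aet, aeY] with ω e2 e7 e8 e9 e10 e11
        simp only [hPhid]
        rw [← e2, ← e7, ← e8, ← e9, ← e10, ← e11]
      rw [← hb]
      simp only [H2]
      exact integral_const_mul _ _
    have hcm : condMean P (fun ω => μ11 (X ω) / μ10 (X ω) * μ00 (X ω)) {ω | S ω = 0}
        = (P {ω | S ω = 0}).toReal⁻¹ * ∫ ω, T0 ω ∂P := by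
      have h1 : ∫ ω in {ω | S ω = 0}, (μ11 (X ω) / μ10 (X ω) * μ00 (X ω)) ∂P
          = ∫ ω, (1 - S ω) * (μ11 (X ω) / μ10 (X ω) * μ00 (X ω)) ∂P :=
        weight_integral P hB0 _ hw01 hw00 _
      have h2 : ∫ ω, (1 - S ω) * (μ11 (X ω) / μ10 (X ω) * μ00 (X ω)) ∂P
          = ∫ ω, T0 ω ∂P := by
        refine integral_congr_ae ?_
        filter_upwards [aeu11, aeu10, aeu00] with ω e4 e5 e6
        simp only [hT0d]
        rw [e4, e5, e6]
        ring
      show (∫ ω in {ω | S ω = 0}, (μ11 (X ω) / μ10 (X ω) * μ00 (X ω)) ∂P)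
          / (P {ω | S ω = 0}).toReal = _
      rw [h1, h2, div_eq_mul_inv, mul_comm]
    have hdiff : (∫ ω, H2 P X S A Y q m11' m10' m00' t' p' ω ∂P) -
        condMean P (fun ω => μ11 (X ω) / μ10 (X ω) * μ00 (X ω)) {ω | S ω = 0}
        = (P {ω | S ω = 0}).toReal⁻¹ *
            (∫ ω, j1 ω ∂P + ∫ ω, j2 ω ∂P + ∫ ω, j3 ω ∂P + ∫ ω, j4 ω ∂P) := by
      rw [hH2, hcm, hsplit, hD1, hD2, hD3, hD4, hD5, hD6, hD7, hD8]
      ring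
    -- Cauchy-Schwarz bounds
    set d1c : Ω → ℝ := fun ω => V11 (X ω) / V10 (X ω) - U11 (X ω) / U10 (X ω) with hd1cd
    set d2c : Ω → ℝ := fun ω => V00 (X ω) - U00 (X ω) with hd2cd
    set d3c : Ω → ℝ := fun ω => V10 (X ω) - U10 (X ω) with hd3cd
    set d4c : Ω → ℝ := fun ω => Tc (X ω) - (1 - Gc (X ω)) / Gc (X ω) with hd4cd
    set d5c : Ω → ℝ := fun ω => p' (X ω) - Pic (X ω) with hd5cd
    have md1c : Measurable d1c := by rw [hd1cd]; exact cXr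
    have md2c : Measurable d2c := by rw [hd2cd]; exact (mV00.comp hX).sub (mU00.comp hX)
    have md3c : Measurable d3c := by rw [hd3cd]; exact (mV10.comp hX).sub (mU10.comp hX)
    have md4c : Measurable d4c := by
      rw [hd4cd]
      exact (mTc.comp hX).sub (((measurable_const.sub mGc).div mGc).comp hX)
    have md5c : Measurable d5c := by rw [hd5cd]; exact (hpm.comp hX).sub (mPic.comp hX)
    have bd1c : ∀ ω, |d1c ω| ≤ M / ε + M / ε := fun ω => by
      simp only [hd1cd]; exact asub (brc _) (bρc _)
    have bd2c : ∀ ω, |d2c ω| ≤ M + M := fun ω => by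
      simp only [hd2cd]; exact asub (bV00 _) (bU00 _)
    have bd3c : ∀ ω, |d3c ω| ≤ M + M := fun ω => by
      simp only [hd3cd]; exact asub (bV10 _).2 (bU10 _).2
    have bd4c : ∀ ω, |d4c ω| ≤ M + 1 / ε := fun ω => by
      simp only [hd4cd]; exact asub (bTcabs _) (bτc _)
    have bd5c : ∀ ω, |d5c ω| ≤ 1 + 1 := fun ω => by
      simp only [hd5cd]; exact asub (bp1 _) (bPic1 _)
    have hN1 : Real.sqrt (∫ ω, d1c ω ^ 2 ∂P)
        = normX P X (fun x => m11' x / m10' x - μ11 x / μ10 x) := by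
      show _ = Real.sqrt (∫ ω, (m11' (X ω) / m10' (X ω) - μ11 (X ω) / μ10 (X ω)) ^ 2 ∂P)
      congr 1
      refine integral_congr_ae ?_
      filter_upwards [aev11, aev10, aeu11, aeu10] with ω e7 e8 e4 e5
      simp only [hd1cd]
      rw [e7, e8, e4, e5]
    have hN2 : Real.sqrt (∫ ω, d2c ω ^ 2 ∂P) = normX P X (fun x => m00' x - μ00 x) := by
      show _ = Real.sqrt (∫ ω, (m00' (X ω) - μ00 (X ω)) ^ 2 ∂P)
      congr 1
      refine integral_congr_ae ?_
      filter_upwards [aev00, aeu00] with ω e9 e6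
      simp only [hd2cd]
      rw [e9, e6]
    have hN3 : Real.sqrt (∫ ω, d3c ω ^ 2 ∂P) = normX P X (fun x => m10' x - μ10 x) := by
      show _ = Real.sqrt (∫ ω, (m10' (X ω) - μ10 (X ω)) ^ 2 ∂P)
      congr 1
      refine integral_congr_ae ?_
      filter_upwards [aev10, aeu10] with ω e8 e5
      simp only [hd3cd]
      rw [e8, e5]
    have hN4 : Real.sqrt (∫ ω, d4c ω ^ 2 ∂P)
        = normX P X (fun x => t' x - (1 - g x) / g x) := by
      show _ = Real.sqrt (∫ ω, (t' (X ω) - (1 - g (X ω)) / g (X ω)) ^ 2 ∂P)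
      congr 1
      refine integral_congr_ae ?_
      filter_upwards [aet, aeg] with ω e10 e1
      simp only [hd4cd]
      rw [e10, e1]
    have hN5 : Real.sqrt (∫ ω, d5c ω ^ 2 ∂P) = normX P X (fun x => p' x - π x) := by
      show _ = Real.sqrt (∫ ω, (p' (X ω) - π (X ω)) ^ 2 ∂P)
      congr 1
      refine integral_congr_ae ?_
      filter_upwards [aepi] with ω e3
      simp only [hd5cd]
      rw [e3]
    have hn1 : 0 ≤ normX P X (fun x => m11' x / m10' x - μ11 x / μ10 x) := by
      rw [← hN1]; exact Real.sqrt_nonneg _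
    have hn2 : 0 ≤ normX P X (fun x => m00' x - μ00 x) := by
      rw [← hN2]; exact Real.sqrt_nonneg _
    have hn3 : 0 ≤ normX P X (fun x => m10' x - μ10 x) := by
      rw [← hN3]; exact Real.sqrt_nonneg _
    have hn4 : 0 ≤ normX P X (fun x => t' x - (1 - g x) / g x) := by
      rw [← hN4]; exact Real.sqrt_nonneg _
    have hn5 : 0 ≤ normX P X (fun x => p' x - π x) := by
      rw [← hN5]; exact Real.sqrt_nonneg _
    have hK1 : (1:ℝ) ≤ M ^ 2 / ε ^ 2 := by
      rw [le_div_iff₀ (by positivity)]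
      nlinarith [mul_nonneg (sub_nonneg.mpr hεM) (show (0:ℝ) ≤ M + ε by positivity)]
    have hK2 : M / ε ≤ M ^ 2 / ε ^ 2 := by
      rw [div_le_div_iff₀ hε0 (by positivity)]
      nlinarith [mul_nonneg (mul_nonneg hM0 hε0.le) (sub_nonneg.mpr hεM)]
    have hK3 : M / ε / ε ≤ M ^ 2 / ε ^ 2 := by
      rw [div_div, div_le_div_iff₀ (by positivity) (by positivity)]
      nlinarith [mul_nonneg (mul_nonneg (mul_pos hε0 hε0).le hM0) (sub_nonneg.mpr hM)]
    have hK4 : M / ε * M ≤ M ^ 2 / ε ^ 2 := by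
      rw [div_mul_eq_mul_div, div_le_div_iff₀ hε0 (by positivity)]
      nlinarith [mul_nonneg (mul_nonneg (mul_nonneg hM0 hM0) hε0.le)
        (sub_nonneg.mpr hε1.le)]
    have hI1 : |∫ ω, j1 ω ∂P| ≤ M ^ 2 / ε ^ 2 *
        (normX P X (fun x => m11' x / m10' x - μ11 x / μ10 x) *
          normX P X (fun x => m00' x - μ00 x)) := by
      have hstep : ∀ ω, |j1 ω| ≤ 1 * (|d1c ω| * |d2c ω|) := by
        intro ω
        have e : j1 ω = (1 - S ω) * (d1c ω * (U00 (X ω) - V00 (X ω))) := by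
          simp only [hj1d, hd1cd]; ring
        rw [e, abs_mul, abs_mul, abs_sub_comm (U00 (X ω)) (V00 (X ω))]
        exact mul_le_mul_of_nonneg_right (b1S ω) (by positivity)
      have iRHS : Integrable (fun ω => 1 * (|d1c ω| * |d2c ω|)) P :=
        (integrable_of_bddM P (md1c.abs.mul md2c.abs) _
          (fun ω => amul (by rw [abs_abs]; exact bd1c ω)
            (by rw [abs_abs]; exact bd2c ω))).const_mul 1
      calc |∫ ω, j1 ω ∂P| ≤ ∫ ω, |j1 ω| ∂P := by
            simpa [Real.norm_eq_abs] using norm_integral_le_integral_norm (fun ω => j1 ω)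
        _ ≤ ∫ ω, 1 * (|d1c ω| * |d2c ω|) ∂P := integral_mono ij1.abs iRHS hstep
        _ = 1 * ∫ ω, |d1c ω| * |d2c ω| ∂P := integral_const_mul 1 _
        _ ≤ 1 * (Real.sqrt (∫ ω, d1c ω ^ 2 ∂P) * Real.sqrt (∫ ω, d2c ω ^ 2 ∂P)) :=
            mul_le_mul_of_nonneg_left (cs_integral P d1c d2c md1c md2c _ _ bd1c bd2c)
              zero_le_one
        _ = 1 * (normX P X (fun x => m11' x / m10' x - μ11 x / μ10 x) *
              normX P X (fun x => m00' x - μ00 x)) := by rw [hN1, hN2]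
        _ ≤ M ^ 2 / ε ^ 2 * (normX P X (fun x => m11' x / m10' x - μ11 x / μ10 x) *
              normX P X (fun x => m00' x - μ00 x)) :=
            mul_le_mul_of_nonneg_right hK1 (mul_nonneg hn1 hn2)
    have hI2 : |∫ ω, j2 ω ∂P| ≤ M ^ 2 / ε ^ 2 *
        (normX P X (fun x => m11' x / m10' x - μ11 x / μ10 x) *
          normX P X (fun x => m10' x - μ10 x)) := by
      have hstep : ∀ ω, |j2 ω| ≤ M / ε * (|d1c ω| * |d3c ω|) := by
        intro ω
        have e : j2 ω = ((1 - S ω) * (V00 (X ω) / V10 (X ω))) * (d1c ω * d3c ω) := by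
          simp only [hj2d, hd1cd, hd3cd]; ring
        rw [e]
        exact amul (by simpa using amul (b1S ω) (bcc (X ω))) (le_of_eq (abs_mul _ _))
      have iRHS : Integrable (fun ω => M / ε * (|d1c ω| * |d3c ω|)) P :=
        (integrable_of_bddM P (md1c.abs.mul md3c.abs) _
          (fun ω => amul (by rw [abs_abs]; exact bd1c ω)
            (by rw [abs_abs]; exact bd3c ω))).const_mul (M / ε)
      calc |∫ ω, j2 ω ∂P| ≤ ∫ ω, |j2 ω| ∂P := by
            simpa [Real.norm_eq_abs] using norm_integral_le_integral_norm (fun ω => j2 ω)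
        _ ≤ ∫ ω, M / ε * (|d1c ω| * |d3c ω|) ∂P := integral_mono ij2.abs iRHS hstep
        _ = M / ε * ∫ ω, |d1c ω| * |d3c ω| ∂P := integral_const_mul _ _
        _ ≤ M / ε * (Real.sqrt (∫ ω, d1c ω ^ 2 ∂P) * Real.sqrt (∫ ω, d3c ω ^ 2 ∂P)) :=
            mul_le_mul_of_nonneg_left (cs_integral P d1c d3c md1c md3c _ _ bd1c bd3c)
              (by positivity)
        _ = M / ε * (normX P X (fun x => m11' x / m10' x - μ11 x / μ10 x) *
              normX P X (fun x => m10' x - μ10 x)) := by rw [hN1, hN3]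
        _ ≤ M ^ 2 / ε ^ 2 * (normX P X (fun x => m11' x / m10' x - μ11 x / μ10 x) *
              normX P X (fun x => m10' x - μ10 x)) :=
            mul_le_mul_of_nonneg_right hK2 (mul_nonneg hn1 hn3)
    have hI3 : |∫ ω, j3 ω ∂P| ≤ M ^ 2 / ε ^ 2 *
        (normX P X (fun x => p' x - π x) * normX P X (fun x => m00' x - μ00 x)) := by
      have hstep : ∀ ω, |j3 ω| ≤ M / ε / ε * (|d5c ω| * |d2c ω|) := by
        intro ω
        have e : j3 ω = ((1 - S ω) * (V11 (X ω) / V10 (X ω)) / p' (X ω)) *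
            ((Pic (X ω) - p' (X ω)) * (U00 (X ω) - V00 (X ω))) := by
          simp only [hj3d]; ring
        rw [e, abs_mul, abs_mul, abs_sub_comm (Pic (X ω)) (p' (X ω)),
          abs_sub_comm (U00 (X ω)) (V00 (X ω))]
        exact mul_le_mul (by simpa using adiv (amul (b1S ω) (brc (X ω))) hε0 (bpabs (X ω)))
          le_rfl (by positivity) (by positivity)
      have iRHS : Integrable (fun ω => M / ε / ε * (|d5c ω| * |d2c ω|)) P :=
        (integrable_of_bddM P (md5c.abs.mul md2c.abs) _
          (fun ω => amul (by rw [abs_abs]; exact bd5c ω)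
            (by rw [abs_abs]; exact bd2c ω))).const_mul (M / ε / ε)
      calc |∫ ω, j3 ω ∂P| ≤ ∫ ω, |j3 ω| ∂P := by
            simpa [Real.norm_eq_abs] using norm_integral_le_integral_norm (fun ω => j3 ω)
        _ ≤ ∫ ω, M / ε / ε * (|d5c ω| * |d2c ω|) ∂P := integral_mono ij3.abs iRHS hstep
        _ = M / ε / ε * ∫ ω, |d5c ω| * |d2c ω| ∂P := integral_const_mul _ _
        _ ≤ M / ε / ε * (Real.sqrt (∫ ω, d5c ω ^ 2 ∂P) * Real.sqrt (∫ ω, d2c ω ^ 2 ∂P)) :=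
            mul_le_mul_of_nonneg_left (cs_integral P d5c d2c md5c md2c _ _ bd5c bd2c)
              (by positivity)
        _ = M / ε / ε * (normX P X (fun x => p' x - π x) *
              normX P X (fun x => m00' x - μ00 x)) := by rw [hN5, hN2]
        _ ≤ M ^ 2 / ε ^ 2 * (normX P X (fun x => p' x - π x) *
              normX P X (fun x => m00' x - μ00 x)) :=
            mul_le_mul_of_nonneg_right hK3 (mul_nonneg hn5 hn2)
    have hI4 : |∫ ω, j4 ω ∂P| ≤ M ^ 2 / ε ^ 2 *
        (normX P X (fun x => t' x - (1 - g x) / g x) *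
          normX P X (fun x => m11' x / m10' x - μ11 x / μ10 x)) := by
      have hstep : ∀ ω, |j4 ω| ≤ M / ε * M * (|d4c ω| * |d1c ω|) := by
        intro ω
        have e : j4 ω = -((Gc (X ω) * (V00 (X ω) / V10 (X ω)) * U10 (X ω)) *
            (d4c ω * d1c ω)) := by
          simp only [hj4d, hd4cd, hd1cd]; ring
        rw [e, abs_neg]
        exact amul (by simpa using amul (amul (bGc1 (X ω)) (bcc (X ω))) (bU10 (X ω)).2)
          (le_of_eq (abs_mul _ _))
      have iRHS : Integrable (fun ω => M / ε * M * (|d4c ω| * |d1c ω|)) P :=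
        (integrable_of_bddM P (md4c.abs.mul md1c.abs) _
          (fun ω => amul (by rw [abs_abs]; exact bd4c ω)
            (by rw [abs_abs]; exact bd1c ω))).const_mul (M / ε * M)
      calc |∫ ω, j4 ω ∂P| ≤ ∫ ω, |j4 ω| ∂P := by
            simpa [Real.norm_eq_abs] using norm_integral_le_integral_norm (fun ω => j4 ω)
        _ ≤ ∫ ω, M / ε * M * (|d4c ω| * |d1c ω|) ∂P := integral_mono ij4.abs iRHS hstep
        _ = M / ε * M * ∫ ω, |d4c ω| * |d1c ω| ∂P := integral_const_mul _ _
        _ ≤ M / ε * M * (Real.sqrt (∫ ω, d4c ω ^ 2 ∂P) * Real.sqrt (∫ ω, d1c ω ^ 2 ∂P)) :=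
            mul_le_mul_of_nonneg_left (cs_integral P d4c d1c md4c md1c _ _ bd4c bd1c)
              (by positivity)
        _ = M / ε * M * (normX P X (fun x => t' x - (1 - g x) / g x) *
              normX P X (fun x => m11' x / m10' x - μ11 x / μ10 x)) := by rw [hN4, hN1]
        _ ≤ M ^ 2 / ε ^ 2 * (normX P X (fun x => t' x - (1 - g x) / g x) *
              normX P X (fun x => m11' x / m10' x - μ11 x / μ10 x)) :=
            mul_le_mul_of_nonneg_right hK4 (mul_nonneg hn4 hn1)
    calc |(∫ ω, H2 P X S A Y q m11' m10' m00' t' p' ω ∂P) -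
          condMean P (fun ω => μ11 (X ω) / μ10 (X ω) * μ00 (X ω)) {ω | S ω = 0}|
        = (P {ω | S ω = 0}).toReal⁻¹ *
            |∫ ω, j1 ω ∂P + ∫ ω, j2 ω ∂P + ∫ ω, j3 ω ∂P + ∫ ω, j4 ω ∂P| := by
          rw [hdiff, abs_mul, abs_of_nonneg hκ0]
      _ ≤ (P {ω | S ω = 0}).toReal⁻¹ *
            (M ^ 2 / ε ^ 2 * (normX P X (fun x => m11' x / m10' x - μ11 x / μ10 x) *
                normX P X (fun x => m00' x - μ00 x))
              + M ^ 2 / ε ^ 2 * (normX P X (fun x => m11' x / m10' x - μ11 x / μ10 x) *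
                normX P X (fun x => m10' x - μ10 x))
              + M ^ 2 / ε ^ 2 * (normX P X (fun x => p' x - π x) *
                normX P X (fun x => m00' x - μ00 x))
              + M ^ 2 / ε ^ 2 * (normX P X (fun x => t' x - (1 - g x) / g x) *
                normX P X (fun x => m11' x / m10' x - μ11 x / μ10 x))) := by
          refine mul_le_mul_of_nonneg_left ?_ hκ0
          have t1 := abs_add_le (∫ ω, j1 ω ∂P + ∫ ω, j2 ω ∂P + ∫ ω, j3 ω ∂P) (∫ ω, j4 ω ∂P)
          have t2 := abs_add_le (∫ ω, j1 ω ∂P + ∫ ω, j2 ω ∂P) (∫ ω, j3 ω ∂P)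
          have t3 := abs_add_le (∫ ω, j1 ω ∂P) (∫ ω, j2 ω ∂P)
          linarith [hI1, hI2, hI3, hI4]
      _ = (P {ω | S ω = 0}).toReal⁻¹ * (M ^ 2 / ε ^ 2) *
            (normX P X (fun x => m11' x / m10' x - μ11 x / μ10 x) *
              (normX P X (fun x => m00' x - μ00 x) +
                normX P X (fun x => m10' x - μ10 x) +
                normX P X (fun x => t' x - (1 - g x) / g x)) +
            normX P X (fun x => m00' x - μ00 x) *
              normX P X (fun x => p' x - π x)) := by ring
  refine ⟨?_, ⟨(P {ω | S ω = 0}).toReal⁻¹ * (M ^ 2 / ε ^ 2), main⟩⟩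
  intro m11' m10' m00' t' p' hadm hcase
  have hb := main m11' m10' m00' t' p' hadm
  rcases hcase with hc | hc | hc
  · have n1 : normX P X (fun x => m11' x / m10' x - μ11 x / μ10 x) = 0 :=
      normX_zero _ (hc.mono fun ω h => by simp [h.1])
    have n2 : normX P X (fun x => m00' x - μ00 x) = 0 :=
      normX_zero _ (hc.mono fun ω h => by simp [h.2])
    rw [n1, n2] at hb
    exact sub_eq_zero.mp (abs_nonpos_iff.mp (hb.trans_eq (by ring)))
  · have n1 : normX P X (fun x => m11' x / m10' x - μ11 x / μ10 x) = 0 :=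
      normX_zero _ (hc.mono fun ω h => by simp [h.1])
    have n5 : normX P X (fun x => p' x - π x) = 0 :=
      normX_zero _ (hc.mono fun ω h => by simp [h.2])
    rw [n1, n5] at hb
    exact sub_eq_zero.mp (abs_nonpos_iff.mp (hb.trans_eq (by ring)))
  · have n2 : normX P X (fun x => m00' x - μ00 x) = 0 :=
      normX_zero _ (hc.mono fun ω h => by simp [h.1])
    have n3 : normX P X (fun x => m10' x - μ10 x) = 0 :=
      normX_zero _ (hc.mono fun ω h => by simp [h.2.1])
    have n4 : normX P X (fun x => t' x - (1 - g x) / g x) = 0 :=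
      normX_zero _ (hc.mono fun ω h => by simp [h.2.2])
    rw [n2, n3, n4] at hb
    exact sub_eq_zero.mp (abs_nonpos_iff.mp (hb.trans_eq (by ring)))
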